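/- Let X be a regular Hausdorff topological space. Then X is k-scattered (i.e., every nonempty closed subspace A ⊆ X contains a compact subset K ⊆ A with nonempty interior in A) if and only if X is weakly homeomorphic to a compact Hausdorff topological space. -/

import Mathlib

open Set Function Topology

/-- A map `f : X → Y` is weakly discontinuous if every nonempty subset `A ⊆ X`
contains a nonempty subset `U`, open in the subspace topology of `A`, on which
`f` restricts to a continuous map. -/
def WeaklyDiscontinuous {X Y : Type*} [TopologicalSpace X] [TopologicalSpace Y]
    (f : X → Y) : Prop :=
  ∀ A : Set X, A.Nonempty → ∃ U : Set X, U ⊆ A ∧ U.Nonempty ∧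
    (∃ V : Set X, IsOpen V ∧ U = A ∩ V) ∧ ContinuousOn f U

/-- Topological spaces `X` and `Y` are weakly homeomorphic if there is a bijection
`f : X → Y` such that both `f` and its inverse are weakly discontinuous. -/
def WeaklyHomeomorphic (X : Type*) (Y : Type*) [TopologicalSpace X] [TopologicalSpace Y] :
    Prop :=
  ∃ (f : X → Y) (g : Y → X), Function.LeftInverse g f ∧ Function.RightInverse g f ∧
    WeaklyDiscontinuous f ∧ WeaklyDiscontinuous g

set_option linter.unusedSectionVars false
set_option linter.unusedVariables false
universe u




lemma aux_compact_nbhd {Y : Type*} [TopologicalSpace Y] [T2Space Y] {B W : Set Y}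
    (hB : IsCompact B) (hW : IsOpen W) {y : Y} (hyB : y ∈ B) (hyW : y ∈ W) :
    ∃ K, IsCompact K ∧ K ⊆ B ∩ W ∧ ∃ V, IsOpen V ∧ y ∈ V ∧ B ∩ V ⊆ K := by
  haveI : CompactSpace B := isCompact_iff_compactSpace.mp hB
  have hWo : IsOpen ((Subtype.val : B → Y) ⁻¹' W) := hW.preimage continuous_subtype_val
  obtain ⟨K₀, hK₀c, hmem, hK₀sub⟩ :=
    exists_compact_subset hWo (show (⟨y, hyB⟩ : B) ∈ _ from hyW)
  obtain ⟨V₀, hV₀, hV₀eq⟩ := isOpen_induced_iff.mp (isOpen_interior (s := K₀))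
  refine ⟨Subtype.val '' K₀, hK₀c.image continuous_subtype_val, ?_, V₀, hV₀, ?_, ?_⟩
  · rintro _ ⟨z, hz, rfl⟩
    exact ⟨z.2, hK₀sub hz⟩
  · have : (⟨y, hyB⟩ : B) ∈ Subtype.val ⁻¹' V₀ := hV₀eq.symm ▸ hmem
    exact this
  · rintro b ⟨hbB, hbV⟩
    have : (⟨b, hbB⟩ : B) ∈ interior K₀ := by
      rw [← hV₀eq]; exact hbV
    exact ⟨⟨b, hbB⟩, interior_subset this, rfl⟩

variable {X : Type u} [TopologicalSpace X] [T2Space X]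

def dKS (A : Set X) : Set X :=
  A \ ⋃₀ {V | IsOpen V ∧ ∃ K, K ⊆ A ∧ IsCompact K ∧ A ∩ V ⊆ K}

noncomputable def itrKS : Ordinal.{u} → Set X :=
  fun α => dKS (⋂ β : Iio α, itrKS β.1)
termination_by α => α
decreasing_by exact β.2

noncomputable def JKS (α : Ordinal.{u}) : Set X := ⋂ β : Iio α, itrKS β.1

noncomputable def LKS (α : Ordinal.{u}) : Set X := JKS α \ itrKS α

lemma itrKS_eq (α : Ordinal.{u}) : (itrKS α : Set X) = dKS (JKS α) := by
  rw [itrKS]; rfl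

lemma dKS_subset {A : Set X} : dKS A ⊆ A := diff_subset

lemma isClosed_dKS {A : Set X} (hA : IsClosed A) : IsClosed (dKS A) :=
  hA.sdiff (isOpen_sUnion fun _ hV => hV.1)

lemma mem_JKS {x : X} {α : Ordinal.{u}} : x ∈ JKS α ↔ ∀ β < α, x ∈ itrKS β := by
  simp [JKS, mem_iInter, Subtype.forall]

lemma isClosed_itrKS : ∀ α : Ordinal.{u}, IsClosed (itrKS α : Set X) := by
  intro α
  induction α using Ordinal.induction with
  | h α IH =>
    rw [itrKS_eq]
    exact isClosed_dKS (isClosed_iInter fun β => IH β.1 β.2)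

lemma isClosed_JKS (α : Ordinal.{u}) : IsClosed (JKS α : Set X) :=
  isClosed_iInter fun β => isClosed_itrKS β.1

variable (hKS : ∀ A : Set X, IsClosed A → A.Nonempty →
      ∃ K : Set X, K ⊆ A ∧ IsCompact K ∧
        ∃ V : Set X, IsOpen V ∧ (A ∩ V).Nonempty ∧ A ∩ V ⊆ K)

include hKS in
lemma JKS_drop {α : Ordinal.{u}} (hne : (JKS α : Set X).Nonempty) :
    ∃ x ∈ (JKS α : Set X), x ∉ (itrKS α : Set X) := by
  obtain ⟨K, hKA, hKc, V, hV, hne2, hsub⟩ := hKS (JKS α) (isClosed_JKS α) hne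
  obtain ⟨x, hxJ, hxV⟩ := hne2
  refine ⟨x, hxJ, ?_⟩
  rw [itrKS_eq]
  intro hx
  exact hx.2 ⟨V, ⟨hV, K, hKA, hKc, hsub⟩, hxV⟩

include hKS in
lemma exists_JKS_empty : ∃ α : Ordinal.{u}, (JKS α : Set X) = ∅ := by
  by_contra hc
  push_neg at hc
  have hinj : Function.Injective (JKS : Ordinal.{u} → Set X) := by
    have key : ∀ {α β : Ordinal.{u}}, α < β → (JKS α : Set X) ≠ JKS β := by
      intro α β hlt hEq
      obtain ⟨x, hxJ, hxI⟩ := JKS_drop hKS (hc α)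
      have hxβ : x ∈ (JKS β : Set X) := hEq ▸ hxJ
      exact hxI (mem_JKS.mp hxβ α hlt)
    intro α β hEq
    rcases lt_trichotomy α β with h | h | h
    · exact absurd hEq (key h)
    · exact h
    · exact absurd hEq.symm (key h)
  exact not_small_ordinal.{u} (small_of_injective hinj)

noncomputable def rkKS (x : X) : Ordinal.{u} := sInf {α | x ∉ itrKS α}

include hKS in
lemma rkKS_not_mem (x : X) : x ∉ (itrKS (rkKS x) : Set X) := by
  have hne : {α : Ordinal.{u} | x ∉ (itrKS α : Set X)}.Nonempty := by
    obtain ⟨θ, hθ⟩ := exists_JKS_empty hKS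
    have : x ∉ (JKS θ : Set X) := by rw [hθ]; exact notMem_empty x
    rw [mem_JKS] at this
    push_neg at this
    obtain ⟨β, _, hβ⟩ := this
    exact ⟨β, hβ⟩
  exact csInf_mem hne

lemma rkKS_lt {x : X} {β : Ordinal.{u}} (hβ : β < rkKS x) : x ∈ (itrKS β : Set X) := by
  by_contra hx
  exact absurd (csInf_le' (show β ∈ {α | x ∉ (itrKS α : Set X)} from hx)) (not_le.mpr hβ)

include hKS in
lemma mem_LKS_rk (x : X) : x ∈ (LKS (rkKS x) : Set X) :=
  ⟨mem_JKS.mpr fun _ hβ => rkKS_lt hβ, rkKS_not_mem hKS x⟩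

lemma rk_eq_of_mem {x : X} {β : Ordinal.{u}} (hx : x ∈ (LKS β : Set X)) : rkKS x = β := by
  refine le_antisymm (csInf_le' hx.2) (le_csInf ⟨β, hx.2⟩ ?_)
  intro γ hγ
  by_contra hlt
  exact hγ (mem_JKS.mp hx.1 γ (not_le.mp hlt))

lemma LKS_disjoint {α β : Ordinal.{u}} (hne : α ≠ β) : (LKS α : Set X) ∩ LKS β = ∅ := by
  ext x
  simp only [mem_inter_iff, mem_empty_iff_false, iff_false, not_and]
  intro h1 h2
  exact hne ((rk_eq_of_mem h1).symm.trans (rk_eq_of_mem h2))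

noncomputable def ZT : TopologicalSpace X where
  IsOpen W := ∀ α : Ordinal.{u}, ∃ V : Set X, IsOpen V ∧ W ∩ LKS α = V ∩ LKS α
  isOpen_univ := fun _ => ⟨univ, isOpen_univ, rfl⟩
  isOpen_inter := by
    intro s t hs ht α
    obtain ⟨V1, h1, e1⟩ := hs α
    obtain ⟨V2, h2, e2⟩ := ht α
    refine ⟨V1 ∩ V2, h1.inter h2, ?_⟩
    ext x
    have e1' : x ∈ s ∩ LKS α ↔ x ∈ V1 ∩ LKS α := by rw [e1]
    have e2' : x ∈ t ∩ LKS α ↔ x ∈ V2 ∩ LKS α := by rw [e2]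
    simp only [mem_inter_iff] at *
    tauto
  isOpen_sUnion := by
    intro S hS α
    choose V hVo hVe using fun s (hs : s ∈ S) => hS s hs α
    refine ⟨⋃ s, ⋃ hs : s ∈ S, V s hs,
      isOpen_iUnion fun s => isOpen_iUnion fun hs => hVo s hs, ?_⟩
    ext x
    simp only [mem_inter_iff, mem_sUnion, mem_iUnion]
    constructor
    · rintro ⟨⟨s, hs, hxs⟩, hxL⟩
      have : x ∈ V s hs ∩ LKS α := by rw [← hVe s hs]; exact ⟨hxs, hxL⟩
      exact ⟨⟨s, hs, this.1⟩, hxL⟩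
    · rintro ⟨⟨s, hs, hxV⟩, hxL⟩
      have : x ∈ s ∩ LKS α := by rw [hVe s hs]; exact ⟨hxV, hxL⟩
      exact ⟨⟨s, hs, this.1⟩, hxL⟩

lemma ZT_isOpen_iff {W : Set X} :
    IsOpen[ZT] W ↔ ∀ α : Ordinal.{u}, ∃ V : Set X, IsOpen V ∧ W ∩ LKS α = V ∩ LKS α :=
  Iff.rfl

lemma ZT_le {V : Set X} (hV : IsOpen V) : IsOpen[ZT] V :=
  fun _ => ⟨V, hV, rfl⟩

lemma LKS_isOpen_ZT (α : Ordinal.{u}) : IsOpen[ZT] (LKS α : Set X) := by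
  intro β
  rcases eq_or_ne α β with rfl | hne
  · exact ⟨univ, isOpen_univ, by simp⟩
  · exact ⟨∅, isOpen_empty, by rw [LKS_disjoint hne]; simp⟩

lemma ZT_t2 : @T2Space X ZT := by
  refine @T2Space.mk X ZT ?_
  intro x y hxy
  obtain ⟨u, v, hu, hv, hxu, hyv, huv⟩ := t2_separation hxy
  exact ⟨u, v, ZT_le hu, ZT_le hv, hxu, hyv, huv⟩

include hKS in
lemma ZT_trace_piece (A' : Set X) (hne : A'.Nonempty) :
    ∃ U ⊆ A', U.Nonempty ∧ (∃ V, IsOpen V ∧ U = A' ∩ V) ∧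
      ∀ t : Set X, IsOpen[ZT] t → ∃ u, IsOpen u ∧ t ∩ U = u ∩ U := by
  set s : Set Ordinal.{u} := {α | (A' ∩ LKS α).Nonempty} with hs
  have hsne : s.Nonempty := by
    obtain ⟨x, hx⟩ := hne
    exact ⟨rkKS x, ⟨x, hx, mem_LKS_rk hKS x⟩⟩
  set ρ := sInf s with hρ
  have hρs : ρ ∈ s := csInf_mem hsne
  have hsubJ : A' ⊆ JKS ρ := by
    intro x hx
    refine mem_JKS.mpr fun β hβ => ?_
    have : ρ ≤ rkKS x := csInf_le' (⟨x, hx, mem_LKS_rk hKS x⟩ : rkKS x ∈ s)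
    exact rkKS_lt (lt_of_lt_of_le hβ this)
  refine ⟨A' ∩ LKS ρ, inter_subset_left, hρs, ⟨(itrKS ρ)ᶜ, (isClosed_itrKS ρ).isOpen_compl, ?_⟩, ?_⟩
  · ext x
    simp only [mem_inter_iff, LKS, mem_diff, mem_compl_iff]
    exact ⟨fun ⟨h1, _, h3⟩ => ⟨h1, h3⟩, fun ⟨h1, h2⟩ => ⟨h1, hsubJ h1, h2⟩⟩
  · intro t ht
    obtain ⟨u, hu, he⟩ := ht ρ
    refine ⟨u, hu, ?_⟩
    ext x
    have he' : x ∈ t ∩ LKS ρ ↔ x ∈ u ∩ LKS ρ := by rw [he]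
    simp only [mem_inter_iff] at *
    tauto

include hKS in
lemma ZT_weaklyLocallyCompact :
    ∀ x : X, ∃ K : Set X, @IsCompact X ZT K ∧ K ∈ @nhds X ZT x := by
  intro x
  set ρ := rkKS x with hρdef
  have hxL : x ∈ (LKS ρ : Set X) := mem_LKS_rk hKS x
  have hxJ : x ∈ (JKS ρ : Set X) := hxL.1
  have hxd : x ∉ dKS (JKS ρ) := by rw [← itrKS_eq]; exact hxL.2
  have hxU : x ∈ ⋃₀ {V : Set X | IsOpen V ∧ ∃ K, K ⊆ JKS ρ ∧ IsCompact K ∧ JKS ρ ∩ V ⊆ K} := by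
    by_contra hc
    exact hxd ⟨hxJ, hc⟩
  obtain ⟨V, ⟨hVo, K, hKJ, hKc, hKV⟩, hxV⟩ := hxU
  have hxK : x ∈ K := hKV ⟨hxJ, hxV⟩
  have hWo : IsOpen (V ∩ (itrKS ρ)ᶜ) := hVo.inter (isClosed_itrKS ρ).isOpen_compl
  obtain ⟨K', hK'c, hK'sub, V'', hV''o, hxV'', hKV''⟩ :=
    aux_compact_nbhd hKc hWo hxK ⟨hxV, hxL.2⟩
  have hK'L : K' ⊆ LKS ρ := by
    intro z hz
    obtain ⟨hzK, hzV, hzI⟩ := hK'sub hz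
    exact ⟨hKJ hzK, hzI⟩
  refine ⟨K', ?_, ?_⟩
  · -- ZT-compactness of K'
    refine @isCompact_of_finite_subcover X ZT K' ?_
    intro ι U hUo hcov
    choose Vc hVco hVce using fun i => hUo i ρ
    have hcov' : K' ⊆ ⋃ i, Vc i := by
      intro z hz
      obtain ⟨i, hi⟩ := mem_iUnion.mp (hcov hz)
      have : z ∈ Vc i ∩ LKS ρ := by rw [← hVce i]; exact ⟨hi, hK'L hz⟩
      exact mem_iUnion.mpr ⟨i, this.1⟩
    obtain ⟨t, ht⟩ := hK'c.elim_finite_subcover Vc hVco hcov'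
    refine ⟨t, fun z hz => ?_⟩
    obtain ⟨i, hit, hi⟩ := mem_iUnion₂.mp (ht hz)
    have : z ∈ U i ∩ LKS ρ := by rw [hVce i]; exact ⟨hi, hK'L hz⟩
    exact mem_iUnion₂.mpr ⟨i, hit, this.1⟩
  · -- ZT-neighborhood
    have hopen : IsOpen[ZT] (LKS ρ ∩ (V ∩ V'')) :=
      @IsOpen.inter X ZT _ _ (LKS_isOpen_ZT ρ) (ZT_le (hVo.inter hV''o))
    have hxmem : x ∈ LKS ρ ∩ (V ∩ V'') := ⟨hxL, hxV, hxV''⟩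
    have hsub : LKS ρ ∩ (V ∩ V'') ⊆ K' := by
      rintro z ⟨hzL, hzV, hzV''⟩
      exact hKV'' ⟨hKV ⟨hzL.1, hzV⟩, hzV''⟩
    have hnb : LKS ρ ∩ (V ∩ V'') ∈ @nhds X ZT x := by
      rw [@mem_nhds_iff X ZT x _]
      exact ⟨_, subset_rfl, hopen, hxmem⟩
    exact Filter.mem_of_superset hnb hsub

def Zc (X : Type u) : Type u := X
def Zc.mk {X : Type u} (x : X) : Zc X := x

lemma wd_of_continuous {X Y : Type*} [TopologicalSpace X] [TopologicalSpace Y]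
    {f : X → Y} (hf : Continuous f) : WeaklyDiscontinuous f :=
  fun A hA => ⟨A, subset_rfl, hA, ⟨univ, isOpen_univ, (inter_univ A).symm⟩,
    hf.continuousOn⟩



theorem kScattered_iff_weaklyHomeomorphic_to_compact
    {X : Type u} [TopologicalSpace X] [T2Space X] [RegularSpace X] :
    (∀ A : Set X, IsClosed A → A.Nonempty →
      ∃ K : Set X, K ⊆ A ∧ IsCompact K ∧
        ∃ V : Set X, IsOpen V ∧ (A ∩ V).Nonempty ∧ A ∩ V ⊆ K) ↔
    ∃ (Y : Type u) (tY : TopologicalSpace Y),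
      CompactSpace Y ∧ T2Space Y ∧ WeaklyHomeomorphic X Y := by
  classical
  constructor
  · intro hKS
    rcases isEmpty_or_nonempty X with hX | hX
    · haveI : Finite X := Finite.of_subsingleton
      exact ⟨X, ‹_›, inferInstance, inferInstance, id, id, fun _ => rfl, fun _ => rfl,
        wd_of_continuous continuous_id, wd_of_continuous continuous_id⟩
    · obtain ⟨p⟩ := hX
      letI tZ : TopologicalSpace (Zc X) := (ZT : TopologicalSpace X)
      haveI hT2Z : T2Space (Zc X) := (ZT_t2 : @T2Space X ZT)
      haveI : WeaklyLocallyCompactSpace (Zc X) :=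
        ⟨fun x => ZT_weaklyLocallyCompact hKS x⟩
      haveI : LocallyCompactSpace (Zc X) := inferInstance
      have hSo : IsOpen ({Zc.mk p}ᶜ : Set (Zc X)) := isOpen_compl_singleton
      haveI : LocallyCompactSpace ({Zc.mk p}ᶜ : Set (Zc X)) := hSo.locallyCompactSpace
      refine ⟨OnePoint ({Zc.mk p}ᶜ : Set (Zc X)), inferInstance, inferInstance, inferInstance, ?_⟩
      set S : Set (Zc X) := {Zc.mk p}ᶜ with hSdef
      set f : X → OnePoint S := fun x =>
        if hx : x = p then OnePoint.infty else ((⟨Zc.mk x, fun h => hx h⟩ : S) : OnePoint S)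
        with hfdef
      set g : OnePoint S → X := fun y => Option.elim y p (fun z => z.1) with hgdef
      have hfp : f p = OnePoint.infty := dif_pos rfl
      have hfnp : ∀ (x : X) (hx : x ≠ p), f x = ((⟨Zc.mk x, fun h => hx h⟩ : S) : OnePoint S) :=
        fun x hx => dif_neg hx
      refine ⟨f, g, ?_, ?_, ?_, ?_⟩
      · -- LeftInverse g f
        intro x
        by_cases hx : x = p
        · subst hx; rw [hfp]; rfl
        · rw [hfnp x hx]; rfl
      · -- RightInverse g f
        intro y
        match y with
        | none => rw [show g none = p from rfl]; exact hfp
        | some z =>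
          have hz : (z.1 : X) ≠ p := fun h => z.2 h
          rw [show g (some z) = (z.1 : X) from rfl, hfnp _ hz]
          congr 1
      · -- WeaklyDiscontinuous f
        intro A hA
        by_cases hAp : A ⊆ {p}
        · have hAeq : A = {p} := hAp.antisymm (by
            obtain ⟨a, ha⟩ := hA
            have := hAp ha
            simp only [mem_singleton_iff] at this
            subst this
            exact singleton_subset_iff.mpr ha)
          exact ⟨A, subset_rfl, hA, ⟨univ, isOpen_univ, (inter_univ A).symm⟩,
            by rw [hAeq]; exact continuousOn_singleton f p⟩
        · have hA'ne : (A ∩ {p}ᶜ).Nonempty := by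
            rw [not_subset] at hAp
            obtain ⟨a, haA, hap⟩ := hAp
            exact ⟨a, haA, hap⟩
          obtain ⟨U, hUsub, hUne, ⟨V₀, hV₀, hUeq⟩, htrace⟩ :=
            ZT_trace_piece hKS (A ∩ {p}ᶜ) hA'ne
          refine ⟨U, hUsub.trans inter_subset_left, hUne,
            ⟨V₀ ∩ {p}ᶜ, hV₀.inter isOpen_compl_singleton, ?_⟩, ?_⟩
          · rw [hUeq]; ext x
            simp only [mem_inter_iff, mem_compl_iff, mem_singleton_iff]
            tauto
          · rw [continuousOn_iff']
            intro t ht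
            obtain ⟨W, hWo, hWeq⟩ :=
              isOpen_induced_iff.mp (OnePoint.continuous_coe.isOpen_preimage t ht)
            obtain ⟨u, huo, hueq⟩ := htrace W hWo
            refine ⟨u, huo, ?_⟩
            rw [← hueq]
            ext x
            simp only [mem_inter_iff, mem_preimage]
            refine and_congr_left fun hxU => ?_
            have hxp : x ≠ p := (hUsub hxU).2
            rw [hfnp x hxp]
            have : ((⟨Zc.mk x, fun h => hxp h⟩ : S) : OnePoint S) ∈ t ↔
                (⟨Zc.mk x, fun h => hxp h⟩ : S) ∈ (fun z : S => (z : OnePoint S)) ⁻¹' t :=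
              Iff.rfl
            rw [this, ← hWeq]
            exact Iff.rfl
      · -- WeaklyDiscontinuous g
        intro A hA
        by_cases hAi : A ⊆ {OnePoint.infty}
        · have hAeq : A = {OnePoint.infty} := hAi.antisymm (by
            obtain ⟨a, ha⟩ := hA
            have := hAi ha
            simp only [mem_singleton_iff] at this
            subst this
            exact singleton_subset_iff.mpr ha)
          exact ⟨A, subset_rfl, hA, ⟨univ, isOpen_univ, (inter_univ A).symm⟩,
            by rw [hAeq]; exact continuousOn_singleton g _⟩
        · have hU'ne : (A ∩ {OnePoint.infty}ᶜ).Nonempty := by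
            rw [not_subset] at hAi
            obtain ⟨a, haA, hai⟩ := hAi
            exact ⟨a, haA, hai⟩
          have hco : IsOpen ({OnePoint.infty}ᶜ : Set (OnePoint S)) := by
            rw [OnePoint.compl_infty]
            exact OnePoint.isOpen_range_coe
          refine ⟨A ∩ {OnePoint.infty}ᶜ, inter_subset_left, hU'ne,
            ⟨{OnePoint.infty}ᶜ, hco, rfl⟩, ?_⟩
          rw [continuousOn_iff']
          intro u huo
          have hvo : IsOpen ((Subtype.val ⁻¹' (u : Set (Zc X))) : Set S) := by
            apply IsOpen.preimage continuous_subtype_val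
            exact (ZT_le huo : IsOpen[ZT] u)
          refine ⟨(fun z : S => (z : OnePoint S)) '' (Subtype.val ⁻¹' (u : Set (Zc X))),
            OnePoint.isOpenMap_coe _ hvo, ?_⟩
          ext y
          simp only [mem_inter_iff, mem_preimage, mem_compl_iff, mem_singleton_iff]
          refine and_congr_left fun hyU => ?_
          obtain ⟨z, rfl⟩ : ∃ z : S, (z : OnePoint S) = y :=
            Option.ne_none_iff_exists.mp hyU.2
          constructor
          · intro hgu
            exact ⟨z, hgu, rfl⟩
          · rintro ⟨z', hz', hzz⟩
            have hz'z : z' = z := Option.some.inj hzz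
            subst hz'z
            exact hz'
  · rintro ⟨Y, tY, hCY, hT2Y, f, g, hgf, hfg, wf, wg⟩
    intro A hAc hAne
    obtain ⟨U, hUA, hUne, ⟨V_U, hV_Uo, hUeq⟩, hfc⟩ := wf A hAne
    set B := closure (f '' U) with hBdef
    have hBc : IsCompact B := isClosed_closure.isCompact
    have hBne : B.Nonempty := (hUne.image f).closure
    obtain ⟨W, hWB, hWne, ⟨V_Y, hV_Yo, hWeq⟩, hgc⟩ := wg B hBne
    obtain ⟨y₀, hy₀⟩ := hWne
    have hy₀B : y₀ ∈ B := hWB hy₀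
    have hy₀V : y₀ ∈ V_Y := by rw [hWeq] at hy₀; exact hy₀.2
    have hmeet : (V_Y ∩ f '' U).Nonempty := mem_closure_iff.mp hy₀B V_Y hV_Yo hy₀V
    obtain ⟨y, hyV, a, haU, hay⟩ := hmeet
    have hyB : y ∈ B := subset_closure ⟨a, haU, hay⟩
    obtain ⟨K', hK'c, hK'sub, V', hV'o, hyV', hBV'⟩ := aux_compact_nbhd hBc hV_Yo hyB hyV
    have hK'W : K' ⊆ W := by rw [hWeq]; exact hK'sub
    have hgK'c : IsCompact (g '' K') := hK'c.image_of_continuousOn (hgc.mono hK'W)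
    obtain ⟨u, huo, hueq⟩ := continuousOn_iff'.mp hfc V' hV'o
    refine ⟨g '' K' ∩ A, inter_subset_right, hgK'c.inter_right hAc, u ∩ V_U,
      huo.inter hV_Uo, ?_, ?_⟩
    · have haV' : a ∈ f ⁻¹' V' ∩ U := ⟨by rw [mem_preimage, hay]; exact hyV', haU⟩
      rw [hueq] at haV'
      have haVU : a ∈ V_U := by rw [hUeq] at haU; exact haU.2
      exact ⟨a, hUA haU, haV'.1, haVU⟩
    · rintro b ⟨hbA, hbu, hbV_U⟩
      have hbU : b ∈ U := by rw [hUeq]; exact ⟨hbA, hbV_U⟩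
      have hbV' : b ∈ f ⁻¹' V' := by
        have : b ∈ u ∩ U := ⟨hbu, hbU⟩
        rw [← hueq] at this
        exact this.1
      have hfbK' : f b ∈ K' := hBV' ⟨subset_closure (mem_image_of_mem f hbU), hbV'⟩
      exact ⟨⟨f b, hfbK', hgf b⟩, hbA⟩
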